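/- Let x be a chain-point for the chain V_0 ⊊ V_1 ⊊ … ⊊ V_k. Let A ⊆ V with x(E(A)) = |A| − 1, and let i ∈ {0,…,k} be such that E(A) ∩ δ(V_i) ≠ ∅. Then x(E(A) ∩ δ(V_i)) ≥ 1. Consequently, if A, B ⊆ V are disjoint sets with x(E(A)) = |A| − 1 and x(E(B)) = |B| − 1, then there is no i ∈ {0,…,k} with both E(A) ∩ δ(V_i) ≠ ∅ and E(B) ∩ δ(V_i) ≠ ∅. -/

import Mathlib

open Finset
open scoped Classical

variable {V : Type*} [Fintype V]

/-- The set of edges of `G` with one endpoint in `S₁` and the other in `S₂`. -/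
noncomputable def cutBetween (G : SimpleGraph V) (S₁ S₂ : Finset V) : Finset (Sym2 V) :=
  G.edgeFinset.filter (fun e => ∃ u v, e = s(u, v) ∧ u ∈ S₁ ∧ v ∈ S₂)

/-- The cut `δ(S)`: edges of `G` with exactly one endpoint in `S`. -/
noncomputable def cut (G : SimpleGraph V) (S : Finset V) : Finset (Sym2 V) :=
  cutBetween G S Sᶜ

/-- `E(S)`: edges of `G` with both endpoints in `S`. -/
noncomputable def inducedEdges (G : SimpleGraph V) (S : Finset V) : Finset (Sym2 V) :=
  G.edgeFinset.filter (fun e => ∀ v ∈ e, v ∈ S)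

/-- `T` is the edge set of a spanning tree of `G`. -/
def IsSpanningTree (G : SimpleGraph V) (T : Finset (Sym2 V)) : Prop :=
  (T : Set (Sym2 V)) ⊆ G.edgeSet ∧ (SimpleGraph.fromEdgeSet (T : Set (Sym2 V))).IsTree

/-- Characteristic vector of a set of edges. -/
noncomputable def chi (T : Finset (Sym2 V)) : Sym2 V → ℝ :=
  fun e => if e ∈ T then 1 else 0

/-- The spanning tree polytope `Sp(G)`. -/
noncomputable def spanningTreePolytope (G : SimpleGraph V) : Set (Sym2 V → ℝ) :=
  convexHull ℝ {x | ∃ T : Finset (Sym2 V), IsSpanningTree G T ∧ x = chi T}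

/-- The level sets `L_i = V_i \ V_{i-1}` of a chain `V_0 ⊊ … ⊊ V_k` (with `V_{-1} = ∅`,
`V_{k+1} = V`). -/
noncomputable def level (Vc : ℕ → Finset V) (k : ℕ) : ℕ → Finset V :=
  fun i => if i = 0 then Vc 0 else if i ≤ k then Vc i \ Vc (i - 1) else Finset.univ \ Vc k

/-- `x` is a chain-point for the chain `V_0 ⊊ … ⊊ V_k`. -/
def IsChainPoint (G : SimpleGraph V) (Vc : ℕ → Finset V) (k : ℕ) (x : Sym2 V → ℝ) : Prop :=
  x ∈ spanningTreePolytope G ∧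
  (∑ e ∈ cut G (Vc 0), x e) = 1 ∧
  (∑ e ∈ cut G (Vc k), x e) = 1 ∧
  (∀ i, 1 ≤ i → i ≤ k - 1 → (∑ e ∈ cut G (Vc i), x e) < 2) ∧
  (∀ i, 1 ≤ i → i ≤ k →
    (∑ v ∈ level Vc k i, ∑ e ∈ cut G {v}, x e) = 2 * ((level Vc k i).card : ℝ))

/-- A Gao-tree for the chain `V_0 ⊊ … ⊊ V_k`: a spanning tree meeting each cut `δ(V_i)`
in exactly one edge. -/
def IsGaoTree (G : SimpleGraph V) (Vc : ℕ → Finset V) (k : ℕ) (T : Finset (Sym2 V)) : Prop :=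
  IsSpanningTree G T ∧ ∀ i ≤ k, (T ∩ cut G (Vc i)).card = 1

/-- A Gao-tree for the subchain of `V_0 ⊊ … ⊊ V_k` given by the index set `I`. -/
def IsGaoTreeOn (G : SimpleGraph V) (Vc : ℕ → Finset V) (I : Finset ℕ)
    (T : Finset (Sym2 V)) : Prop :=
  IsSpanningTree G T ∧ ∀ i ∈ I, (T ∩ cut G (Vc i)).card = 1

/-- `Sp_𝒞(G)`: the convex hull of characteristic vectors of Gao-trees. -/
noncomputable def gaoPolytope (G : SimpleGraph V) (Vc : ℕ → Finset V) (k : ℕ) :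
    Set (Sym2 V → ℝ) :=
  convexHull ℝ {x | ∃ T : Finset (Sym2 V), IsGaoTree G Vc k T ∧ x = chi T}

/-- `F` is the edge set of a spanning tree of the induced subgraph `G(U)`. -/
def IsSpanningTreeOfInduced (G : SimpleGraph V) (U : Finset V) (F : Finset (Sym2 V)) : Prop :=
  (F : Set (Sym2 V)) ⊆ G.edgeSet ∧ (∀ e ∈ F, ∀ v ∈ e, v ∈ U) ∧
  F.card = U.card - 1 ∧
  ∀ u ∈ U, ∀ v ∈ U, (SimpleGraph.fromEdgeSet (F : Set (Sym2 V))).Reachable u v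

/-- The rank of `X` in the cycle matroid of `G`. -/
noncomputable def cycleRank (G : SimpleGraph V) (X : Finset (Sym2 V)) : ℕ :=
  (G.edgeFinset.powerset.filter (fun T => IsSpanningTree G T)).sup (fun T => (T ∩ X).card)

/-- The rank of `X` in the matroid whose bases are the Gao-trees. -/
noncomputable def gaoRank (G : SimpleGraph V) (Vc : ℕ → Finset V) (k : ℕ)
    (X : Finset (Sym2 V)) : ℕ :=
  (G.edgeFinset.powerset.filter (fun T => IsGaoTree G Vc k T)).sup (fun T => (T ∩ X).card)

/-- `x` is a solution of the `s`–`t` path TSP subtour elimination LP. -/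
def IsSubtourLPSolution (G : SimpleGraph V) (s t : V) (x : Sym2 V → ℝ) : Prop :=
  x ∈ spanningTreePolytope G ∧
  (∀ v, v ≠ s → v ≠ t → (∑ e ∈ cut G {v}, x e) = 2) ∧
  (∑ e ∈ cut G {s}, x e) = 1 ∧ (∑ e ∈ cut G {t}, x e) = 1

/-- Rank function of a matroid on a finite ground set, as a function on finsets. -/
noncomputable def mrank {E : Type*} [Fintype E] (M : Matroid E) (X : Finset E) : ℕ :=
  (X.powerset.filter (fun I : Finset E => M.Indep (I : Set E))).sup Finset.card

/-- Convex hull of characteristic vectors of independent sets of a matroid. -/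
noncomputable def indepPolytope {E : Type*} [Fintype E] (M : Matroid E) : Set (E → ℝ) :=
  convexHull ℝ {x | ∃ I : Finset E, M.Indep (I : Set E) ∧
    x = fun e => if e ∈ I then (1 : ℝ) else 0}

section MyAux
open SimpleGraph Walk

/-- In a path starting at `u`, there is at most one edge containing `u`. -/
lemma my_start_edge_unique {G : SimpleGraph V} {u v : V} {p : G.Walk u v} (hp : p.IsPath)
    {e₁ e₂ : Sym2 V} (h1 : e₁ ∈ p.edges) (hu1 : u ∈ e₁) (h2 : e₂ ∈ p.edges) (hu2 : u ∈ e₂) :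
    e₁ = e₂ := by
  cases p with
  | nil => simp at h1
  | @cons _ w _ hadj q =>
    rw [Walk.cons_isPath_iff] at hp
    have key : ∀ e ∈ (Walk.cons hadj q).edges, u ∈ e → e = s(u, w) := by
      intro e he hue
      rw [Walk.edges_cons, List.mem_cons] at he
      rcases he with rfl | he
      · rfl
      · exfalso
        induction e using Sym2.ind with
        | _ a b =>
          rcases Sym2.mem_iff.1 hue with rfl | rfl
          · exact hp.2 (q.fst_mem_support_of_mem_edges he)
          · exact hp.2 (q.snd_mem_support_of_mem_edges he)
    rw [key e₁ h1 hu1, key e₂ h2 hu2]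

/-- In a tree, the number of edges with all endpoints inside `S` is less than `|S|`,
for nonempty `S`. -/
lemma my_tree_induced_card {G : SimpleGraph V} (hT : G.IsTree) (S : Finset V)
    (hS : S.Nonempty) (F : Finset (Sym2 V))
    (hF : ∀ e ∈ F, e ∈ G.edgeSet ∧ ∀ v ∈ e, v ∈ S) :
    F.card + 1 ≤ S.card := by
  obtain ⟨r, hr⟩ := hS
  choose f hf hf' using (hT.existsUnique_path · r)
  -- every edge has a "far" endpoint
  have hex : ∀ e ∈ G.edgeSet, ∃ u, u ∈ e ∧ e ∈ (f u).edges := by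
    intro e he
    induction e using Sym2.ind with
    | _ a b =>
      rw [SimpleGraph.mem_edgeSet] at he
      by_cases hae : s(a, b) ∈ (f a).edges
      · exact ⟨a, Sym2.mem_mk_left a b, hae⟩
      · refine ⟨b, Sym2.mem_mk_right a b, ?_⟩
        have hbs : b ∉ (f a).support := by
          intro hb
          have hpath : ((f a).takeUntil b hb).IsPath := (hf a).takeUntil hb
          have hsingle : (Walk.cons he Walk.nil).IsPath := by
            simp [Walk.isPath_def, he.ne]
          have huniq := ExistsUnique.unique (hT.existsUnique_path a b) hpath hsingle
          have : s(a, b) ∈ ((f a).takeUntil b hb).edges := by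
            rw [huniq]; simp
          exact hae (Walk.edges_takeUntil_subset _ hb this)
        have : (Walk.cons he.symm (f a)).IsPath := (hf a).cons hbs
        have := ExistsUnique.unique (hT.existsUnique_path b r) this (hf b)
        rw [← this, Walk.edges_cons]
        simp [Sym2.eq_swap]
  have hmem : ∀ e ∈ F, ∃ u, u ∈ e ∧ e ∈ (f u).edges := fun e he =>
    hex e (hF e he).1
  classical
  have hcard : F.card ≤ (S.erase r).card := by
    refine Finset.card_le_card_of_injOn
      (fun e => if h : ∃ u, u ∈ e ∧ e ∈ (f u).edges then h.choose else r) ?_ ?_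
    · intro e he
      have h := hmem e he
      simp only [dif_pos h]
      obtain ⟨hue, hfe⟩ := h.choose_spec
      have hS' : h.choose ∈ S := (hF e he).2 _ hue
      have hne : h.choose ≠ r := by
        intro hrr
        rw [hrr] at hfe
        have : f r = Walk.nil := Walk.isPath_iff_eq_nil.1 (hf r)
        rw [this] at hfe
        simp at hfe
      exact Finset.mem_erase.2 ⟨hne, hS'⟩
    · intro e₁ he₁ e₂ he₂ heq
      have h1 := hmem e₁ he₁
      have h2 := hmem e₂ he₂
      simp only [dif_pos h1, dif_pos h2] at heq
      obtain ⟨hu1, hfe1⟩ := h1.choose_spec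
      obtain ⟨hu2, hfe2⟩ := h2.choose_spec
      rw [heq] at hu1 hfe1
      exact my_start_edge_unique (hf _) hfe1 hu1 hfe2 hu2
  calc F.card + 1 ≤ (S.erase r).card + 1 := by omega
    _ = S.card := by
      have := Finset.card_pos.2 ⟨r, hr⟩
      rw [Finset.card_erase_of_mem hr]; omega

lemma my_sp_nonneg {G : SimpleGraph V} {x : Sym2 V → ℝ}
    (hx : x ∈ spanningTreePolytope G) (e : Sym2 V) : 0 ≤ x e := by
  have hconv : Convex ℝ {y : Sym2 V → ℝ | 0 ≤ y e} :=
    convex_halfSpace_ge ⟨fun a b => rfl, fun c a => rfl⟩ 0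
  have hsub : {y : Sym2 V → ℝ | ∃ T : Finset (Sym2 V), IsSpanningTree G T ∧ y = chi T}
      ⊆ {y | 0 ≤ y e} := by
    rintro y ⟨T, _, rfl⟩
    simp only [Set.mem_setOf_eq, chi]
    split <;> norm_num
  exact convexHull_min hsub hconv hx

lemma my_sp_induced_le {G : SimpleGraph V} {x : Sym2 V → ℝ}
    (hx : x ∈ spanningTreePolytope G) (S : Finset V) (hS : S.Nonempty) :
    ∑ e ∈ inducedEdges G S, x e ≤ (S.card : ℝ) - 1 := by
  have hconv : Convex ℝ {y : Sym2 V → ℝ | ∑ e ∈ inducedEdges G S, y e ≤ (S.card : ℝ) - 1} :=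
    convex_halfSpace_le
      ⟨fun a b => Finset.sum_add_distrib, fun c a => by simp [Finset.mul_sum]⟩ _
  have hsub : {y : Sym2 V → ℝ | ∃ T : Finset (Sym2 V), IsSpanningTree G T ∧ y = chi T}
      ⊆ {y | ∑ e ∈ inducedEdges G S, y e ≤ (S.card : ℝ) - 1} := by
    rintro y ⟨T, hT, rfl⟩
    simp only [Set.mem_setOf_eq, chi]
    rw [Finset.sum_boole]
    have h1 : ((inducedEdges G S).filter (· ∈ T)).card + 1 ≤ S.card := by
      refine my_tree_induced_card hT.2 S hS _ ?_
      intro e he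
      rw [Finset.mem_filter] at he
      obtain ⟨heI, heT⟩ := he
      rw [inducedEdges, Finset.mem_filter, SimpleGraph.mem_edgeFinset] at heI
      rw [SimpleGraph.edgeSet_fromEdgeSet]
      exact ⟨⟨heT, SimpleGraph.not_isDiag_of_mem_edgeSet G heI.1⟩, heI.2⟩
    push_cast
    have : (((inducedEdges G S).filter (· ∈ T)).card : ℝ) + 1 ≤ (S.card : ℝ) := by
      exact_mod_cast h1
    linarith
  exact convexHull_min hsub hconv hx

lemma my_cut_mem {G : SimpleGraph V} {W : Finset V} {e : Sym2 V} :
    e ∈ cut G W ↔ e ∈ G.edgeFinset ∧ ∃ u v, e = s(u, v) ∧ u ∈ W ∧ v ∉ W := by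
  simp only [cut, cutBetween, Finset.mem_filter, Finset.mem_compl]

lemma my_decomp {G : SimpleGraph V} (x : Sym2 V → ℝ) (A W : Finset V) :
    ∑ e ∈ inducedEdges G A, x e =
      ∑ e ∈ inducedEdges G (A ∩ W), x e + ∑ e ∈ inducedEdges G (A \ W), x e +
      ∑ e ∈ inducedEdges G A ∩ cut G W, x e := by
  have hsplit : ∑ e ∈ inducedEdges G A, x e =
      ∑ e ∈ (inducedEdges G A).filter (· ∉ cut G W), x e +
      ∑ e ∈ (inducedEdges G A).filter (· ∈ cut G W), x e := by
    rw [add_comm, Finset.sum_filter_add_sum_filter_not]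
  have hinter : (inducedEdges G A).filter (· ∈ cut G W) = inducedEdges G A ∩ cut G W :=
    Finset.filter_mem_eq_inter
  have hrest : (inducedEdges G A).filter (· ∉ cut G W) =
      inducedEdges G (A ∩ W) ∪ inducedEdges G (A \ W) := by
    ext e
    simp only [Finset.mem_filter, Finset.mem_union, inducedEdges, SimpleGraph.mem_edgeFinset]
    induction e using Sym2.ind with
    | _ a b =>
      constructor
      · rintro ⟨⟨he, hA⟩, hcut⟩
        have ha : a ∈ A := hA a (Sym2.mem_mk_left a b)
        have hb : b ∈ A := hA b (Sym2.mem_mk_right a b)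
        by_cases haW : a ∈ W <;> by_cases hbW : b ∈ W
        · left
          refine ⟨he, ?_⟩
          intro v hv
          rcases Sym2.mem_iff.1 hv with rfl | rfl
          · exact Finset.mem_inter.2 ⟨ha, haW⟩
          · exact Finset.mem_inter.2 ⟨hb, hbW⟩
        · exact absurd (my_cut_mem.2 ⟨SimpleGraph.mem_edgeFinset.2 he,
            a, b, rfl, haW, hbW⟩) hcut
        · exact absurd (my_cut_mem.2 ⟨SimpleGraph.mem_edgeFinset.2 he,
            b, a, Sym2.eq_swap, hbW, haW⟩) hcut
        · right
          refine ⟨he, ?_⟩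
          intro v hv
          rcases Sym2.mem_iff.1 hv with rfl | rfl
          · exact Finset.mem_sdiff.2 ⟨ha, haW⟩
          · exact Finset.mem_sdiff.2 ⟨hb, hbW⟩
      · rintro (⟨he, hA⟩ | ⟨he, hA⟩)
        · refine ⟨⟨he, fun v hv => (Finset.mem_inter.1 (hA v hv)).1⟩, ?_⟩
          intro hc
          obtain ⟨-, u, v, heq, hu, hv⟩ := my_cut_mem.1 hc
          exact hv (Finset.mem_inter.1 (hA v (heq ▸ Sym2.mem_mk_right u v))).2
        · refine ⟨⟨he, fun v hv => (Finset.mem_sdiff.1 (hA v hv)).1⟩, ?_⟩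
          intro hc
          obtain ⟨-, u, v, heq, hu, hv⟩ := my_cut_mem.1 hc
          exact (Finset.mem_sdiff.1 (hA u (heq ▸ Sym2.mem_mk_left u v))).2 hu
  have hdisj : Disjoint (inducedEdges G (A ∩ W)) (inducedEdges G (A \ W)) := by
    rw [Finset.disjoint_left]
    intro e h1 h2
    simp only [inducedEdges, Finset.mem_filter] at h1 h2
    induction e using Sym2.ind with
    | _ a b =>
      have h1' := h1.2 a (Sym2.mem_mk_left a b)
      have h2' := h2.2 a (Sym2.mem_mk_left a b)
      exact (Finset.mem_sdiff.1 h2').2 (Finset.mem_inter.1 h1').2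
  rw [hsplit, hinter, hrest, Finset.sum_union hdisj]

end MyAux

theorem stmt13 (G : SimpleGraph V) (hG : G.Connected)
    (Vc : ℕ → Finset V) (k : ℕ)
    (hne : (Vc 0).Nonempty) (hchain : ∀ i < k, Vc i ⊂ Vc (i + 1))
    (htop : Vc k ⊂ Finset.univ)
    (x : Sym2 V → ℝ) (hx : IsChainPoint G Vc k x) :
    (∀ A : Finset V, (∑ e ∈ inducedEdges G A, x e) = (A.card : ℝ) - 1 →
      ∀ i ≤ k, (inducedEdges G A ∩ cut G (Vc i)).Nonempty →
        1 ≤ ∑ e ∈ inducedEdges G A ∩ cut G (Vc i), x e) ∧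
    (∀ A B : Finset V, Disjoint A B →
      (∑ e ∈ inducedEdges G A, x e) = (A.card : ℝ) - 1 →
      (∑ e ∈ inducedEdges G B, x e) = (B.card : ℝ) - 1 →
      ¬ ∃ i ≤ k, (inducedEdges G A ∩ cut G (Vc i)).Nonempty ∧
        (inducedEdges G B ∩ cut G (Vc i)).Nonempty) := by
  obtain ⟨hxSp, hV0, hVk, hmid, -⟩ := hx
  have part1 : ∀ A : Finset V, (∑ e ∈ inducedEdges G A, x e) = (A.card : ℝ) - 1 →
      ∀ i ≤ k, (inducedEdges G A ∩ cut G (Vc i)).Nonempty →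
        1 ≤ ∑ e ∈ inducedEdges G A ∩ cut G (Vc i), x e := by
    intro A hA i hik hne'
    obtain ⟨e, he⟩ := hne'
    set W := Vc i with hW
    rw [Finset.mem_inter] at he
    obtain ⟨heA, heC⟩ := he
    obtain ⟨-, u, v, heq, hu, hv⟩ := my_cut_mem.1 heC
    have huA : u ∈ A := (Finset.mem_filter.1 heA).2 u (heq ▸ Sym2.mem_mk_left u v)
    have hvA : v ∈ A := (Finset.mem_filter.1 heA).2 v (heq ▸ Sym2.mem_mk_right u v)
    have h1 := my_sp_induced_le hxSp (A ∩ W) ⟨u, Finset.mem_inter.2 ⟨huA, hu⟩⟩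
    have h2 := my_sp_induced_le hxSp (A \ W) ⟨v, Finset.mem_sdiff.2 ⟨hvA, hv⟩⟩
    have hdec := my_decomp (G := G) x A W
    have hc : ((A ∩ W).card : ℝ) + ((A \ W).card : ℝ) = (A.card : ℝ) := by
      exact_mod_cast Finset.card_inter_add_card_sdiff A W
    linarith
  refine ⟨part1, ?_⟩
  rintro A B hAB hA hB ⟨i, hik, hAne, hBne⟩
  have hA1 := part1 A hA i hik hAne
  have hB1 := part1 B hB i hik hBne
  set W := Vc i with hW
  have hdisj : Disjoint (inducedEdges G A ∩ cut G W) (inducedEdges G B ∩ cut G W) := by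
    rw [Finset.disjoint_left]
    intro e h1 h2
    have h1' := Finset.mem_inter.1 h1
    have h2' := Finset.mem_inter.1 h2
    induction e using Sym2.ind with
    | _ a b =>
      have ha1 : a ∈ A := (Finset.mem_filter.1 h1'.1).2 a (Sym2.mem_mk_left a b)
      have ha2 : a ∈ B := (Finset.mem_filter.1 h2'.1).2 a (Sym2.mem_mk_left a b)
      exact Finset.disjoint_left.1 hAB ha1 ha2
  have hsub : inducedEdges G A ∩ cut G W ∪ inducedEdges G B ∩ cut G W ⊆ cut G W := by
    intro e he
    rcases Finset.mem_union.1 he with h | h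
    · exact (Finset.mem_inter.1 h).2
    · exact (Finset.mem_inter.1 h).2
  have hge : 2 ≤ ∑ e ∈ cut G W, x e := by
    have hmono := Finset.sum_le_sum_of_subset_of_nonneg hsub
      (fun e _ _ => my_sp_nonneg hxSp e)
    rw [Finset.sum_union hdisj] at hmono
    linarith
  have hlt : ∑ e ∈ cut G W, x e < 2 := by
    by_cases h0 : i = 0
    · rw [hW, h0, hV0]; norm_num
    · by_cases hk : i = k
      · rw [hW, hk, hVk]; norm_num
      · exact hmid i (by omega) (by omega)
  linarith
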